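/- For n agents with identical additive valuations over chores whose conflict graph has every connected component of size at most n, there exists an EF1 and maximal (indeed complete) schedule, computable in polynomial time: allocate each component's chores via round robin using the topological order of the (acyclic, by identical valuations) envy graph of the partial schedule. -/

import Mathlib

namespace Stmt18

open Finset

def Inv {n m : ℕ} (v : Fin m → ℤ) (X : Fin n → Finset (Fin m)) : Prop :=
  ∀ i j, ∀ c ∈ X i, (∀ b ∈ X i, v c ≤ v b) →
    ∑ x ∈ (X i).erase c, v x ≥ ∑ x ∈ X j, v x

lemma inv_iff {n m : ℕ} (v : Fin m → ℤ) (X : Fin n → Finset (Fin m))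
    {i : Fin n} {c : Fin m} (hc : c ∈ X i) :
    (∑ x ∈ (X i).erase c, v x) = (∑ x ∈ X i, v x) - v c :=
  Finset.sum_erase_eq_sub hc

lemma round {n m : ℕ} (v : Fin m → ℤ) (hv : ∀ j, v j ≤ 0)
    (X : Fin n → Finset (Fin m)) (T : Finset (Fin m)) (hT : T.card ≤ n)
    (hdisj : ∀ i, Disjoint T (X i)) (hInv : Inv v X) :
    ∃ N : Fin n → Finset (Fin m),
      (∀ i, N i ⊆ T) ∧ (∀ i, (N i).card ≤ 1) ∧
      (∀ i j, i ≠ j → Disjoint (N i) (N j)) ∧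
      (∀ c ∈ T, ∃ i, c ∈ N i) ∧
      Inv v (fun i => X i ∪ N i) := by
  classical
  set s := T.card with hs
  set g : {x // x ∈ T} ≃ Fin s := T.equivFin with hg
  set σ : Equiv.Perm (Fin s) := Tuple.sort (fun k => v (g.symm k)) with hσ
  set ch : Fin s → Fin m := fun k => ((g.symm (σ k) : {x // x ∈ T}) : Fin m) with hch
  have hch_mem : ∀ k, ch k ∈ T := fun k => (g.symm (σ k)).2
  have hch_inj : Function.Injective ch :=
    Subtype.val_injective.comp (g.symm.injective.comp σ.injective)
  have hch_mono : ∀ {k l : Fin s}, k ≤ l → v (ch k) ≤ v (ch l) := by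
    intro k l hkl
    exact Tuple.monotone_sort (fun k => v (g.symm k)) hkl
  have hch_surj : ∀ c ∈ T, ∃ k, ch k = c := by
    intro c hc
    exact ⟨σ.symm (g ⟨c, hc⟩), by simp [hch]⟩
  set val : Fin n → ℤ := fun i => ∑ x ∈ X i, v x with hval
  set τ : Equiv.Perm (Fin n) := Tuple.sort (fun i => -(val i)) with hτ
  have hval_mono : ∀ {a b : Fin n}, a ≤ b → val (τ b) ≤ val (τ a) := by
    intro a b hab
    have := Tuple.monotone_sort (fun i => -(val i)) hab
    simpa using this
  set N : Fin n → Finset (Fin m) := fun i =>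
    if h : ((τ.symm i : Fin n) : ℕ) < s then {ch ⟨(τ.symm i : Fin n), h⟩} else ∅ with hN
  refine ⟨N, ?_, ?_, ?_, ?_, ?_⟩
  · intro i c hc
    simp only [hN] at hc
    split at hc
    · simp only [mem_singleton] at hc; subst hc; exact hch_mem _
    · simp at hc
  · intro i
    simp only [hN]
    split <;> simp
  · intro i j hij
    simp only [hN]
    split <;> split <;> simp_all
    intro h
    have h2 : ((τ.symm j : Fin n) : ℕ) = ((τ.symm i : Fin n) : ℕ) :=
      h.symm
    exact hij (τ.symm.injective (Fin.val_injective h2)).symm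
  · intro c hc
    obtain ⟨k, hk⟩ := hch_surj c hc
    refine ⟨τ (Fin.castLE hT k), ?_⟩
    simp only [hN, Equiv.symm_apply_apply]
    have hlt : ((Fin.castLE hT k : Fin n) : ℕ) < s := k.2
    rw [dif_pos hlt]
    have : (⟨(Fin.castLE hT k : Fin n), hlt⟩ : Fin s) = k := by
      ext; simp
    rw [this, hk]
    exact mem_singleton_self c
  · intro i j c₀ hc₀ hmin
    -- notation
    set p : Fin n := τ.symm i with hp'
    set q : Fin n := τ.symm j with hq'
    have hi : τ p = i := τ.apply_symm_apply i
    have hj : τ q = j := τ.apply_symm_apply j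
    have hdisjN : ∀ a, Disjoint (X a) (N a) := by
      intro a
      refine Finset.disjoint_left.mpr ?_
      intro x hx hxN
      have hxT : x ∈ T := by
        simp only [hN] at hxN
        split at hxN
        · simp only [mem_singleton] at hxN; subst hxN; exact hch_mem _
        · simp at hxN
      exact (Finset.disjoint_left.mp (hdisj a)) hxT hx
    have hYsum : ∀ a, ∑ x ∈ X a ∪ N a, v x = val a + ∑ x ∈ N a, v x := by
      intro a
      rw [Finset.sum_union (hdisjN a)]
    have hvalle : ∀ a, val a ≤ 0 := fun a => Finset.sum_nonpos (fun x _ => hv x)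
    rw [Finset.sum_erase_eq_sub hc₀, hYsum i, hYsum j]
    -- value of j's new part
    by_cases hqs : (q : ℕ) < s
    case pos =>
      have hNj : N j = {ch ⟨q, hqs⟩} := by simp only [hN, hq']; rw [dif_pos hqs]
      rw [hNj]
      rw [Finset.sum_singleton]
      by_cases hps : (p : ℕ) < s
      case pos =>
        have hNi : N i = {ch ⟨p, hps⟩} := by simp only [hN, hp']; rw [dif_pos hps]
        have hchpY : ch ⟨p, hps⟩ ∈ X i ∪ N i := by
          rw [hNi]; exact mem_union_right _ (mem_singleton_self _)
        have hc0w : v c₀ ≤ v (ch ⟨p, hps⟩) := hmin _ hchpY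
        have hNiSum : ∑ x ∈ N i, v x = v (ch ⟨p, hps⟩) := by rw [hNi, sum_singleton]
        rw [hNiSum]
        by_cases hc0X : c₀ ∈ X i
        case pos =>
          have hminX : ∀ b ∈ X i, v c₀ ≤ v b :=
            fun b hb => hmin b (mem_union_left _ hb)
          have hold : val i - v c₀ ≥ val j := by
            have := hInv i j c₀ hc0X hminX
            rwa [Finset.sum_erase_eq_sub hc0X] at this
          rcases le_or_gt (q : ℕ) (p : ℕ) with hqp | hpq
          · have : v (ch ⟨q, hqs⟩) ≤ v (ch ⟨p, hps⟩) := hch_mono hqp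
            linarith
          · have hple : p ≤ q := le_of_lt hpq
            have : val (τ q) ≤ val (τ p) := hval_mono hple
            rw [hi, hj] at this
            have hq0 : v (ch ⟨q, hqs⟩) ≤ 0 := hv _
            linarith
        case neg =>
          -- c₀ is the new chore
          have hc0N : c₀ ∈ N i := by
            rcases Finset.mem_union.mp hc₀ with h | h
            · exact absurd h hc0X
            · exact h
          have hc0eq : c₀ = ch ⟨p, hps⟩ := by
            rw [hNi] at hc0N; exact mem_singleton.mp hc0N
          rcases le_or_gt (q : ℕ) (p : ℕ) with hqp | hpq
          · have hwq : v (ch ⟨q, hqs⟩) ≤ v (ch ⟨p, hps⟩) := hch_mono hqp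
            rcases (X i).eq_empty_or_nonempty with hXe | hXne
            · have hvi : val i = 0 := by rw [hval]; simp [hXe]
              have := hvalle j
              have hq0 : v (ch ⟨q, hqs⟩) ≤ 0 := hv _
              rw [hc0eq, hvi]
              linarith
            · obtain ⟨c₁, hc₁, hmin₁⟩ := Finset.exists_min_image (X i) v hXne
              have hold : val i - v c₁ ≥ val j := by
                have := hInv i j c₁ hc₁ hmin₁
                rwa [Finset.sum_erase_eq_sub hc₁] at this
              have hc0c1 : v c₀ ≤ v c₁ := hmin _ (mem_union_left _ hc₁)
              rw [hc0eq] at hc0c1 ⊢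
              linarith
          · have hple : p ≤ q := le_of_lt hpq
            have hvv : val (τ q) ≤ val (τ p) := hval_mono hple
            rw [hi, hj] at hvv
            have hq0 : v (ch ⟨q, hqs⟩) ≤ 0 := hv _
            rw [hc0eq]
            linarith
      case neg =>
        -- i unchanged
        have hNi : N i = ∅ := by simp only [hN, hp']; rw [dif_neg hps]
        have hc0X : c₀ ∈ X i := by
          rcases Finset.mem_union.mp hc₀ with h | h
          · exact h
          · rw [hNi] at h; simp at h
        have hminX : ∀ b ∈ X i, v c₀ ≤ v b :=
          fun b hb => hmin b (mem_union_left _ hb)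
        have hold : val i - v c₀ ≥ val j := by
          have := hInv i j c₀ hc0X hminX
          rwa [Finset.sum_erase_eq_sub hc0X] at this
        have hNiSum : ∑ x ∈ N i, v x = 0 := by rw [hNi]; simp
        have hq0 : v (ch ⟨q, hqs⟩) ≤ 0 := hv _
        rw [hNiSum]
        linarith
    case neg =>
      have hNj : N j = ∅ := by simp only [hN, hq']; rw [dif_neg hqs]
      rw [hNj]
      simp only [Finset.sum_empty, add_zero]
      by_cases hps : (p : ℕ) < s
      case pos =>
        have hNi : N i = {ch ⟨p, hps⟩} := by simp only [hN, hp']; rw [dif_pos hps]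
        have hchpY : ch ⟨p, hps⟩ ∈ X i ∪ N i := by
          rw [hNi]; exact mem_union_right _ (mem_singleton_self _)
        have hc0w : v c₀ ≤ v (ch ⟨p, hps⟩) := hmin _ hchpY
        have hNiSum : ∑ x ∈ N i, v x = v (ch ⟨p, hps⟩) := by rw [hNi, sum_singleton]
        rw [hNiSum]
        have hple : p ≤ q := by
          have : (p : ℕ) ≤ (q : ℕ) := le_trans (le_of_lt hps) (le_of_not_gt hqs)
          exact this
        have hvv : val (τ q) ≤ val (τ p) := hval_mono hple
        rw [hi, hj] at hvv
        linarith
      case neg =>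
        have hNi : N i = ∅ := by simp only [hN, hp']; rw [dif_neg hps]
        have hc0X : c₀ ∈ X i := by
          rcases Finset.mem_union.mp hc₀ with h | h
          · exact h
          · rw [hNi] at h; simp at h
        have hminX : ∀ b ∈ X i, v c₀ ≤ v b :=
          fun b hb => hmin b (mem_union_left _ hb)
        have hold : val i - v c₀ ≥ val j := by
          have := hInv i j c₀ hc0X hminX
          rwa [Finset.sum_erase_eq_sub hc0X] at this
        have hNiSum : ∑ x ∈ N i, v x = 0 := by rw [hNi]; simp
        rw [hNiSum]
        linarith

lemma build {n m : ℕ} (G : SimpleGraph (Fin m)) (v : Fin m → ℤ) (hv : ∀ j, v j ≤ 0)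
    (hcomp : ∀ c : Fin m, Set.ncard {d : Fin m | G.Reachable c d} ≤ n) :
    ∀ (K : ℕ) (A : Finset (Fin m)), A.card ≤ K →
      (∀ c ∈ A, ∀ d, G.Reachable c d → d ∈ A) →
      ∃ X : Fin n → Finset (Fin m),
        (∀ i j, i ≠ j → Disjoint (X i) (X j)) ∧
        (∀ i, X i ⊆ A) ∧
        (∀ c ∈ A, ∃ i, c ∈ X i) ∧
        (∀ i, ∀ a ∈ X i, ∀ b ∈ X i, ¬ G.Adj a b) ∧
        Inv v X := by
  classical
  intro K
  induction K with
  | zero =>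
    intro A hA _
    have hAe : A = ∅ := Finset.card_eq_zero.mp (Nat.le_zero.mp hA)
    subst hAe
    exact ⟨fun _ => ∅, by simp, by simp, by simp, by simp, by intro i j c hc; simp at hc⟩
  | succ K ih =>
    intro A hA hcl
    rcases A.eq_empty_or_nonempty with rfl | ⟨c, hc⟩
    · exact ⟨fun _ => ∅, by simp, by simp, by simp, by simp, by intro i j c hc; simp at hc⟩
    · set Cu : Finset (Fin m) := Finset.univ.filter (fun d => G.Reachable c d) with hCu
      have hCuA : Cu ⊆ A := by
        intro d hd
        simp only [hCu, Finset.mem_filter] at hd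
        exact hcl c hc d hd.2
      have hcCu : c ∈ Cu := by simp only [hCu, Finset.mem_filter]; exact ⟨Finset.mem_univ _, SimpleGraph.Reachable.refl c⟩
      have hCcard : Cu.card ≤ n := by
        have hse : {d : Fin m | G.Reachable c d} = (Cu : Set (Fin m)) := by
          ext d; simp [hCu]
        have := hcomp c
        rwa [hse, Set.ncard_coe_finset] at this
      set A' : Finset (Fin m) := A \ Cu with hA'
      have hA'lt : A'.card < A.card := by
        apply Finset.card_lt_card
        constructor
        · exact Finset.sdiff_subset
        · intro hsub
          have := hsub (hCuA hcCu)
          rw [Finset.mem_sdiff] at this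
          exact this.2 hcCu
      have hA'K : A'.card ≤ K := by omega
      have hA'cl : ∀ c' ∈ A', ∀ d, G.Reachable c' d → d ∈ A' := by
        intro c' hc' d hreach
        simp only [hA', Finset.mem_sdiff] at hc' ⊢
        refine ⟨hcl c' hc'.1 d hreach, ?_⟩
        intro hdCu
        apply hc'.2
        simp only [hCu, Finset.mem_filter] at hdCu ⊢
        exact ⟨Finset.mem_univ _, hdCu.2.trans hreach.symm⟩
      obtain ⟨X', hXd, hXsub, hXcov, hXind, hXinv⟩ := ih A' hA'K hA'cl
      have hdisj : ∀ i, Disjoint Cu (X' i) := by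
        intro i
        refine Finset.disjoint_left.mpr fun x hx hx' => ?_
        have := hXsub i hx'
        simp [hA', Finset.mem_sdiff] at this
        exact this.2 hx
      obtain ⟨N, hNsub, hNcard, hNdisj, hNcov, hNinv⟩ :=
        round v hv X' Cu hCcard hdisj hXinv
      refine ⟨fun i => X' i ∪ N i, ?_, ?_, ?_, ?_, hNinv⟩
      · intro i j hij
        have d1 : Disjoint (X' i) (X' j) := hXd i j hij
        have d2 : Disjoint (X' i) (N j) := by
          refine Finset.disjoint_left.mpr fun x hx hxN => ?_
          exact (Finset.disjoint_left.mp (hdisj i)) (hNsub j hxN) hx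
        have d3 : Disjoint (N i) (X' j) := by
          refine Finset.disjoint_left.mpr fun x hx hxN => ?_
          exact (Finset.disjoint_left.mp (hdisj j)) (hNsub i hx) hxN
        have d4 : Disjoint (N i) (N j) := hNdisj i j hij
        simp only [Finset.disjoint_union_left, Finset.disjoint_union_right]
        exact ⟨⟨d1, d3⟩, ⟨d2, d4⟩⟩
      · intro i x hx
        rcases Finset.mem_union.mp hx with h | h
        · exact Finset.mem_sdiff.mp (hXsub i h) |>.1
        · exact hCuA (hNsub i h)
      · intro c' hc'
        by_cases hcC : c' ∈ Cu
        · obtain ⟨i, hi⟩ := hNcov c' hcC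
          exact ⟨i, Finset.mem_union_right _ hi⟩
        · have : c' ∈ A' := Finset.mem_sdiff.mpr ⟨hc', hcC⟩
          obtain ⟨i, hi⟩ := hXcov c' this
          exact ⟨i, Finset.mem_union_left _ hi⟩
      · intro i a ha b hb hadj
        have hnotCu : ∀ x ∈ X' i, x ∉ Cu := by
          intro x hx
          exact fun hxC => (Finset.disjoint_left.mp (hdisj i)) hxC hx
        have hCuReach : ∀ x ∈ Cu, G.Reachable c x := by
          intro x hx
          simp only [hCu, Finset.mem_filter] at hx
          exact hx.2
        rcases Finset.mem_union.mp ha with ha' | ha' <;>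
          rcases Finset.mem_union.mp hb with hb' | hb'
        · exact hXind i a ha' b hb' hadj
        · -- a old, b new : a would be in Cu
          apply hnotCu a ha'
          simp only [hCu, Finset.mem_filter]
          exact ⟨Finset.mem_univ _, (hCuReach b (hNsub i hb')).trans hadj.symm.reachable⟩
        · apply hnotCu b hb'
          simp only [hCu, Finset.mem_filter]
          exact ⟨Finset.mem_univ _, (hCuReach a (hNsub i ha')).trans hadj.reachable⟩
        · have hab : a = b := Finset.card_le_one.mp (hNcard i) a ha' b hb'
          subst hab
          exact G.irrefl hadj

theorem EF1_complete_exists_identical_bounded_components (n m : ℕ)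
    (G : SimpleGraph (Fin m))
    -- identical additive valuation with non-positive chore values
    (v : Fin m → ℤ) (hv : ∀ j, v j ≤ 0)
    -- every connected component has at most n vertices
    (hcomp : ∀ c : Fin m, Set.ncard {d : Fin m | G.Reachable c d} ≤ n) :
    ∃ X : Fin n → Finset (Fin m),
      -- feasible: pairwise disjoint independent bundles
      (∀ i j, i ≠ j → Disjoint (X i) (X j)) ∧
      (∀ i, ∀ a ∈ X i, ∀ b ∈ X i, ¬ G.Adj a b) ∧
      -- complete: every chore is assigned
      (∀ c : Fin m, ∃ i, c ∈ X i) ∧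
      -- maximal: no unassigned chore can be added to any bundle
      (∀ c : Fin m, (∀ i, c ∉ X i) → ∀ i, ∃ a ∈ X i, G.Adj a c) ∧
      -- EF1
      (∀ i j, (X i).Nonempty →
        ∃ c ∈ X i, ∑ x ∈ (X i).erase c, v x ≥ ∑ x ∈ X j, v x) := by
  obtain ⟨X, hd, hsub, hcov, hind, hinv⟩ :=
    build G v hv hcomp (Finset.univ : Finset (Fin m)).card Finset.univ le_rfl
      (fun _ _ d _ => Finset.mem_univ d)
  refine ⟨X, hd, hind, fun c => hcov c (Finset.mem_univ c), ?_, ?_⟩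
  · intro c hnone i
    obtain ⟨i₀, hi₀⟩ := hcov c (Finset.mem_univ c)
    exact absurd hi₀ (hnone i₀)
  · intro i j hne
    obtain ⟨c, hc, hmin⟩ := Finset.exists_min_image (X i) v hne
    exact ⟨c, hc, hinv i j c hc hmin⟩

end Stmt18
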